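/- Let A ⊆ B ⊆ {1,…,N} with |A| ≥ γ·N, let γ ∈ (1/2, 1], ℓ ∈ (0, 2·arccos((1−γ)/γ)), and κ > D(Ω_B)/(γ·sin ℓ − 2(1−γ)·sin(ℓ/2)), and let θ be a Kuramoto solution with D(Θ_A(0)) ≤ ℓ. Then the ensemble Θ_A is stable: sup_{t ≥ 0} D(Θ_A(t)) ≤ ℓ, and moreover limsup_{t→∞} D(Θ_A(t)) ≤ φ₁, where φ₁ is the unique solution of γ·sin φ − 2(1−γ)·sin(φ/2) = D(Ω_B)/κ in [0, θ*] with θ* := 2·arccos((1−γ+√((1−γ)²+8γ²))/(4γ)). -/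

import Mathlib

/-- A Kuramoto solution on `[0,∞)` (modeled as a function on ℝ whose ODE holds on `Set.Ici 0`). -/
def IsKuramotoOn {N : ℕ} (κ : ℝ) (ν : Fin N → ℝ) (θ : ℝ → Fin N → ℝ) : Prop :=
  ∀ (i : Fin N), ∀ t ∈ Set.Ici (0 : ℝ), HasDerivWithinAt (fun s => θ s i)
    (ν i + κ / N * ∑ j, Real.sin (θ t j - θ t i)) (Set.Ici 0) t

/-- Diameter of a sub-ensemble: `max_{i,j ∈ A} |x i - x j|`. -/
noncomputable def diam {N : ℕ} (A : Finset (Fin N)) (x : Fin N → ℝ) : ℝ :=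
  sSup {d : ℝ | ∃ i ∈ A, ∃ j ∈ A, d = |x i - x j|}

namespace KuramotoAux

open Set Filter Real Topology

/-! ### diam basics -/

lemma diam_eq_sup' {N : ℕ} (A : Finset (Fin N)) (hA : A.Nonempty) (x : Fin N → ℝ) :
    diam A x = (A ×ˢ A).sup' (hA.product hA) (fun p => |x p.1 - x p.2|) := by
  rw [Finset.sup'_eq_csSup_image]
  unfold diam
  congr 1
  ext d
  simp only [Set.mem_setOf_eq, Set.mem_image, Finset.mem_coe, Finset.mem_product]
  constructor
  · rintro ⟨i, hi, j, hj, rfl⟩; exact ⟨(i, j), ⟨hi, hj⟩, rfl⟩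
  · rintro ⟨⟨i, j⟩, ⟨hi, hj⟩, rfl⟩; exact ⟨i, hi, j, hj, rfl⟩

lemma abs_sub_le_diam {N : ℕ} {A : Finset (Fin N)} {x : Fin N → ℝ} {i j : Fin N}
    (hi : i ∈ A) (hj : j ∈ A) : |x i - x j| ≤ diam A x := by
  have hA : A.Nonempty := ⟨i, hi⟩
  rw [diam_eq_sup' A hA]
  exact Finset.le_sup' (fun p => |x p.1 - x p.2|)
    (show (i, j) ∈ A ×ˢ A from Finset.mem_product.2 ⟨hi, hj⟩)

lemma diam_nonneg {N : ℕ} {A : Finset (Fin N)} (hA : A.Nonempty) (x : Fin N → ℝ) :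
    0 ≤ diam A x := by
  obtain ⟨i, hi⟩ := hA
  simpa using abs_sub_le_diam hi hi (x := x)

lemma exists_diam_pair {N : ℕ} {A : Finset (Fin N)} (hA : A.Nonempty) (x : Fin N → ℝ) :
    ∃ i ∈ A, ∃ j ∈ A, diam A x = |x i - x j| := by
  obtain ⟨⟨i, j⟩, hp, h⟩ := Finset.exists_mem_eq_sup' (hA.product hA) (fun p => |x p.1 - x p.2|)
  exact ⟨i, (Finset.mem_product.1 hp).1, j, (Finset.mem_product.1 hp).2, by
    rw [diam_eq_sup' A hA]; exact h⟩

/-! ### the order parameter function -/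

noncomputable def fγ (γ x : ℝ) : ℝ := γ * Real.sin x - 2 * (1 - γ) * Real.sin (x / 2)

lemma fγ_hasDerivAt (γ x : ℝ) :
    HasDerivAt (fγ γ) (γ * Real.cos x - (1 - γ) * Real.cos (x / 2)) x := by
  have h1 : HasDerivAt (fun x : ℝ => Real.sin (x / 2)) (Real.cos (x / 2) * (1 / 2)) x := by
    simpa [Function.comp_def] using (Real.hasDerivAt_sin (x / 2)).comp x ((hasDerivAt_id x).div_const 2)
  have h2 : HasDerivAt (fγ γ) (γ * Real.cos x - 2 * (1 - γ) * (Real.cos (x / 2) * (1 / 2))) x :=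
    ((Real.hasDerivAt_sin x).const_mul γ).sub (h1.const_mul (2 * (1 - γ)))
  convert h2 using 1
  ring

lemma fγ_deriv (γ x : ℝ) : deriv (fγ γ) x = γ * Real.cos x - (1 - γ) * Real.cos (x / 2) :=
  (fγ_hasDerivAt γ x).deriv

lemma fγ_continuous (γ : ℝ) : Continuous (fγ γ) := by
  unfold fγ; fun_prop

variable {γ : ℝ}

private lemma sqrtΔ_facts (hγ₁ : 1 / 2 < γ) (hγ₂ : γ ≤ 1) :
    0 ≤ Real.sqrt ((1 - γ) ^ 2 + 8 * γ ^ 2) ∧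
    (Real.sqrt ((1 - γ) ^ 2 + 8 * γ ^ 2)) ^ 2 = (1 - γ) ^ 2 + 8 * γ ^ 2 ∧
    1 - γ ≤ Real.sqrt ((1 - γ) ^ 2 + 8 * γ ^ 2) ∧
    Real.sqrt ((1 - γ) ^ 2 + 8 * γ ^ 2) ≤ 5 * γ - 1 := by
  have hγ0 : 0 < γ := by linarith
  have hΔ : (0:ℝ) ≤ (1 - γ) ^ 2 + 8 * γ ^ 2 := by positivity
  refine ⟨Real.sqrt_nonneg _, Real.sq_sqrt hΔ, ?_, ?_⟩
  · rw [show (1:ℝ) - γ = Real.sqrt ((1-γ)^2) by rw [Real.sqrt_sq (by linarith)]]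
    exact Real.sqrt_le_sqrt (by nlinarith)
  · rw [show (5:ℝ) * γ - 1 = Real.sqrt ((5*γ-1)^2) by rw [Real.sqrt_sq (by linarith)]]
    exact Real.sqrt_le_sqrt (by nlinarith)

/-- `c* ∈ [0,1]` -/
private lemma cstar_mem (hγ₁ : 1 / 2 < γ) (hγ₂ : γ ≤ 1) :
    (0:ℝ) ≤ (1 - γ + Real.sqrt ((1 - γ) ^ 2 + 8 * γ ^ 2)) / (4 * γ) ∧
    (1 - γ + Real.sqrt ((1 - γ) ^ 2 + 8 * γ ^ 2)) / (4 * γ) ≤ 1 := by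
  obtain ⟨h0, hsq, h1, h2⟩ := sqrtΔ_facts (γ := γ) hγ₁ hγ₂
  have hγ0 : 0 < γ := by linarith
  constructor
  · apply div_nonneg (by linarith) (by linarith)
  · rw [div_le_one (by linarith)]; linarith

lemma fγ_strictMonoOn (hγ₁ : 1 / 2 < γ) (hγ₂ : γ ≤ 1) :
    StrictMonoOn (fγ γ)
      (Set.Icc 0 (2 * Real.arccos ((1 - γ + Real.sqrt ((1 - γ) ^ 2 + 8 * γ ^ 2)) / (4 * γ)))) := by
  set c := (1 - γ + Real.sqrt ((1 - γ) ^ 2 + 8 * γ ^ 2)) / (4 * γ) with hc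
  obtain ⟨hc0, hc1⟩ := cstar_mem (γ := γ) hγ₁ hγ₂
  obtain ⟨h0, hsq, h1, h2⟩ := sqrtΔ_facts (γ := γ) hγ₁ hγ₂
  have hγ0 : 0 < γ := by linarith
  apply strictMonoOn_of_deriv_pos (convex_Icc _ _) (fγ_continuous γ).continuousOn
  intro x hx
  rw [interior_Icc] at hx
  rw [fγ_deriv]
  have hu : Real.cos (2 * Real.arccos c / 2) = c := by
    rw [show 2 * Real.arccos c / 2 = Real.arccos c by ring, Real.cos_arccos (by linarith) hc1]
  have hult : c < Real.cos (x / 2) := by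
    rw [← hu]
    apply Real.cos_lt_cos_of_nonneg_of_le_pi (by linarith [hx.1])
    · rw [show 2 * Real.arccos c / 2 = Real.arccos c by ring]; exact Real.arccos_le_pi c
    · linarith [hx.2]
  set u := Real.cos (x / 2) with hu'
  have hcosx : Real.cos x = 2 * u ^ 2 - 1 := by
    have h := Real.cos_sq (x / 2)
    rw [show 2 * (x / 2) = x by ring] at h
    linarith
  rw [hcosx]
  have key : Real.sqrt ((1 - γ) ^ 2 + 8 * γ ^ 2) < 4 * γ * u - (1 - γ) := by
    rw [hc] at hult
    rw [div_lt_iff₀ (by linarith)] at hult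
    linarith
  have hpos : 0 < 4 * γ * u - (1 - γ) := by linarith
  nlinarith [sq_nonneg (4 * γ * u - (1 - γ)), mul_self_lt_mul_self h0 key]

lemma fγ_antitoneOn (hγ₁ : 1 / 2 < γ) (hγ₂ : γ ≤ 1) :
    AntitoneOn (fγ γ)
      (Set.Icc (2 * Real.arccos ((1 - γ + Real.sqrt ((1 - γ) ^ 2 + 8 * γ ^ 2)) / (4 * γ))) π) := by
  set c := (1 - γ + Real.sqrt ((1 - γ) ^ 2 + 8 * γ ^ 2)) / (4 * γ) with hc
  obtain ⟨hc0, hc1⟩ := cstar_mem (γ := γ) hγ₁ hγ₂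
  obtain ⟨h0, hsq, h1, h2⟩ := sqrtΔ_facts (γ := γ) hγ₁ hγ₂
  have hγ0 : 0 < γ := by linarith
  apply antitoneOn_of_deriv_nonpos (convex_Icc _ _) (fγ_continuous γ).continuousOn
  · intro x _
    exact ((fγ_hasDerivAt γ x).differentiableAt).differentiableWithinAt
  intro x hx
  rw [interior_Icc] at hx
  rw [fγ_deriv]
  have hu : Real.cos (2 * Real.arccos c / 2) = c := by
    rw [show 2 * Real.arccos c / 2 = Real.arccos c by ring, Real.cos_arccos (by linarith) hc1]
  have harccos0 : 0 ≤ Real.arccos c := Real.arccos_nonneg c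
  have hugt : Real.cos (x / 2) < c := by
    rw [← hu]
    apply Real.cos_lt_cos_of_nonneg_of_le_pi
    · rw [show 2 * Real.arccos c / 2 = Real.arccos c by ring]; exact harccos0
    · linarith [hx.2, Real.pi_pos]
    · linarith [hx.1]
  have hunn : 0 ≤ Real.cos (x / 2) := by
    apply Real.cos_nonneg_of_mem_Icc
    constructor <;> [linarith [hx.1, harccos0, Real.pi_pos]; linarith [hx.2]]
  set u := Real.cos (x / 2) with hu'
  have hcosx : Real.cos x = 2 * u ^ 2 - 1 := by
    have h := Real.cos_sq (x / 2)
    rw [show 2 * (x / 2) = x by ring] at h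
    linarith
  rw [hcosx]
  have key : 4 * γ * u - (1 - γ) < Real.sqrt ((1 - γ) ^ 2 + 8 * γ ^ 2) := by
    rw [hc] at hugt
    rw [lt_div_iff₀ (by linarith)] at hugt
    linarith
  nlinarith [mul_nonneg (sub_nonneg.2 key.le)
    (by nlinarith [mul_nonneg hγ0.le hunn] :
      (0:ℝ) ≤ Real.sqrt ((1 - γ) ^ 2 + 8 * γ ^ 2) + (4 * γ * u - (1 - γ)))]

lemma fγ_pos {ℓ : ℝ} (hγ₁ : 1 / 2 < γ) (hγ₂ : γ ≤ 1)
    (hℓ : ℓ ∈ Set.Ioo 0 (2 * Real.arccos ((1 - γ) / γ))) : 0 < fγ γ ℓ := by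
  have hγ0 : 0 < γ := by linarith
  have hw0 : 0 ≤ (1 - γ) / γ := div_nonneg (by linarith) hγ0.le
  have hw1 : (1 - γ) / γ ≤ 1 := by rw [div_le_one hγ0]; linarith
  have hs : 0 < Real.sin (ℓ / 2) := by
    apply Real.sin_pos_of_pos_of_lt_pi (by linarith [hℓ.1])
    have harc : Real.arccos ((1 - γ) / γ) ≤ π / 2 := Real.arccos_le_pi_div_two.2 hw0
    linarith [hℓ.2, Real.pi_pos]
  have hcos : (1 - γ) / γ < Real.cos (ℓ / 2) := by
    have := Real.cos_lt_cos_of_nonneg_of_le_pi (by linarith [hℓ.1])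
      (Real.arccos_le_pi _) (by linarith [hℓ.2] : ℓ / 2 < Real.arccos ((1 - γ) / γ))
    rwa [Real.cos_arccos (by linarith) hw1] at this
  have hsinℓ : Real.sin ℓ = 2 * Real.sin (ℓ / 2) * Real.cos (ℓ / 2) := by
    rw [show ℓ = 2 * (ℓ / 2) by ring, Real.sin_two_mul]
    ring_nf
  unfold fγ
  rw [hsinℓ]
  have : 1 - γ < γ * Real.cos (ℓ / 2) := by
    rw [div_lt_iff₀ hγ0] at hcos; linarith
  nlinarith

/-! ### the key pairwise derivative estimate -/

lemma pair_deriv_le {N : ℕ} (hN : 1 ≤ N) {κ : ℝ} (hκ0 : 0 ≤ κ) (hγ₂ : γ ≤ 1)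
    (ν : Fin N → ℝ) (A B : Finset (Fin N)) (hAB : A ⊆ B)
    (hcard : γ * N ≤ (A.card : ℝ)) (x : Fin N → ℝ) {i j : Fin N} (hi : i ∈ A) (hj : j ∈ A)
    {d : ℝ} (heq : x i - x j = d) (hdπ : d ≤ π)
    (hmax : ∀ k ∈ A, |x k - x i| ≤ d ∧ |x k - x j| ≤ d) :
    (ν i + κ / N * ∑ k, Real.sin (x k - x i)) - (ν j + κ / N * ∑ k, Real.sin (x k - x j))
      ≤ diam B ν - κ * fγ γ d := by
  have hd0 : 0 ≤ d := le_trans (abs_nonneg _) (by rw [heq] at *; exact (hmax i hi).2)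
  have hNpos : (0:ℝ) < N := by exact_mod_cast Nat.lt_of_lt_of_le Nat.zero_lt_one hN
  have hsd2 : 0 ≤ Real.sin (d / 2) := Real.sin_nonneg_of_nonneg_of_le_pi (by linarith)
    (by linarith [Real.pi_pos])
  have hsd : 0 ≤ Real.sin d := Real.sin_nonneg_of_nonneg_of_le_pi hd0 hdπ
  have hsin2 : Real.sin d = 2 * Real.sin (d / 2) * Real.cos (d / 2) := by
    rw [show d = 2 * (d / 2) by ring, Real.sin_two_mul]; ring_nf
  have hν : ν i - ν j ≤ diam B ν :=
    le_trans (le_abs_self _) (abs_sub_le_diam (hAB hi) (hAB hj))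
  have hterm : ∀ k : Fin N, Real.sin (x k - x i) - Real.sin (x k - x j)
      = -(2 * Real.sin (d / 2) * Real.cos (x k - (x i + x j) / 2)) := by
    intro k
    rw [Real.sin_sub_sin]
    have h1 : (x k - x i - (x k - x j)) / 2 = -(d / 2) := by rw [← heq]; ring
    have h2 : (x k - x i + (x k - x j)) / 2 = x k - (x i + x j) / 2 := by ring
    rw [h1, h2, Real.sin_neg]
    ring
  have hA_bound : ∀ k ∈ A, Real.sin (x k - x i) - Real.sin (x k - x j) ≤ - Real.sin d := by
    intro k hk
    obtain ⟨hk1, hk2⟩ := hmax k hk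
    have hjk : 0 ≤ x k - x j := by
      have : x i - x k ≤ d := le_trans (le_abs_self _) (by rwa [abs_sub_comm])
      linarith [heq]
    have hki : x k - x j ≤ d := le_trans (le_abs_self _) hk2
    have hmid : |x k - (x i + x j) / 2| ≤ d / 2 := by
      rw [abs_le]
      constructor <;> [nlinarith [heq]; nlinarith [heq]]
    have hcos : Real.cos (d / 2) ≤ Real.cos (x k - (x i + x j) / 2) := by
      rw [← Real.cos_abs (x k - (x i + x j) / 2)]
      exact Real.cos_le_cos_of_nonneg_of_le_pi (abs_nonneg _) (by linarith [Real.pi_pos]) hmid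
    rw [hterm k, hsin2]
    nlinarith
  have hout_bound : ∀ k, Real.sin (x k - x i) - Real.sin (x k - x j) ≤ 2 * Real.sin (d / 2) := by
    intro k
    rw [hterm k]
    nlinarith [Real.neg_one_le_cos (x k - (x i + x j) / 2)]
  have hsplit : ∑ k, (Real.sin (x k - x i) - Real.sin (x k - x j))
      = (∑ k ∈ A, (Real.sin (x k - x i) - Real.sin (x k - x j)))
      + ∑ k ∈ Finset.univ \ A, (Real.sin (x k - x i) - Real.sin (x k - x j)) := by
    rw [add_comm, Finset.sum_sdiff (Finset.subset_univ A)]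
  have hsumA : (∑ k ∈ A, (Real.sin (x k - x i) - Real.sin (x k - x j)))
      ≤ (A.card : ℝ) * (- Real.sin d) := by
    calc (∑ k ∈ A, (Real.sin (x k - x i) - Real.sin (x k - x j)))
        ≤ ∑ _k ∈ A, (- Real.sin d) := Finset.sum_le_sum fun k hk => hA_bound k hk
      _ = (A.card : ℝ) * (- Real.sin d) := by rw [Finset.sum_const, nsmul_eq_mul]
  have hsumout : (∑ k ∈ Finset.univ \ A, (Real.sin (x k - x i) - Real.sin (x k - x j)))
      ≤ ((N : ℝ) - A.card) * (2 * Real.sin (d / 2)) := by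
    have hcard' : ((Finset.univ \ A).card : ℝ) = (N : ℝ) - A.card := by
      rw [Finset.card_sdiff_of_subset (Finset.subset_univ A)]
      rw [Nat.cast_sub (by simpa using Finset.card_le_univ A)]
      simp
    calc (∑ k ∈ Finset.univ \ A, (Real.sin (x k - x i) - Real.sin (x k - x j)))
        ≤ ∑ _k ∈ Finset.univ \ A, (2 * Real.sin (d / 2)) :=
          Finset.sum_le_sum fun k _ => hout_bound k
      _ = ((N:ℝ) - A.card) * (2 * Real.sin (d / 2)) := by
          rw [Finset.sum_const, nsmul_eq_mul, hcard']
  have hsum : ∑ k, (Real.sin (x k - x i) - Real.sin (x k - x j))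
      ≤ (A.card : ℝ) * (- Real.sin d) + ((N : ℝ) - A.card) * (2 * Real.sin (d / 2)) := by
    rw [hsplit]; exact add_le_add hsumA hsumout
  have hANn : A.card ≤ N := le_trans (Finset.card_le_univ A) (le_of_eq (Fintype.card_fin N))
  have hAN : (A.card : ℝ) ≤ N := by exact_mod_cast hANn
  have hstep : κ / N * ∑ k, (Real.sin (x k - x i) - Real.sin (x k - x j)) ≤ - (κ * fγ γ d) := by
    have hκN : 0 ≤ κ / N := div_nonneg hκ0 hNpos.le
    have h2 : (A.card : ℝ) * (- Real.sin d) + ((N : ℝ) - A.card) * (2 * Real.sin (d / 2))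
        ≤ (N:ℝ) * (- (γ * Real.sin d) + (1 - γ) * (2 * Real.sin (d / 2))) := by
      nlinarith
    calc κ / N * ∑ k, (Real.sin (x k - x i) - Real.sin (x k - x j))
        ≤ κ / N * ((N:ℝ) * (- (γ * Real.sin d) + (1 - γ) * (2 * Real.sin (d / 2)))) :=
          mul_le_mul_of_nonneg_left (le_trans hsum h2) hκN
      _ = κ * (- (γ * Real.sin d) + (1 - γ) * (2 * Real.sin (d / 2))) := by
          field_simp
      _ = - (κ * fγ γ d) := by unfold fγ; ring
  have hfinal : (ν i + κ / N * ∑ k, Real.sin (x k - x i))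
      - (ν j + κ / N * ∑ k, Real.sin (x k - x j))
      = (ν i - ν j) + κ / N * ∑ k, (Real.sin (x k - x i) - Real.sin (x k - x j)) := by
    rw [Finset.sum_sub_distrib]; ring
  rw [hfinal]
  linarith

/-! ### slope estimates for the diameter -/

lemma tendsto_sub_inv (t : ℝ) : Tendsto (fun z => (z - t)⁻¹) (𝓝[>] t) atTop := by
  apply tendsto_inv_nhdsGT_zero.comp
  rw [tendsto_nhdsWithin_iff]
  constructor
  · have h : Tendsto (fun z : ℝ => z - t) (𝓝 t) (𝓝 (t - t)) :=
      (continuous_id.sub continuous_const).tendsto t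
    rw [sub_self] at h
    exact h.mono_left nhdsWithin_le_nhds
  · exact eventually_mem_nhdsWithin.mono (fun z hz => by simpa [sub_pos] using hz)

lemma slope_core {N : ℕ} {A : Finset (Fin N)} (hA : A.Nonempty) (θ : ℝ → Fin N → ℝ) (t r : ℝ)
    (h : ∀ p ∈ A ×ˢ A, ∀ᶠ z in 𝓝[>] t,
      (|θ z p.1 - θ z p.2| - diam A (θ t)) / (z - t) < r) :
    ∃ᶠ z in 𝓝[>] t, slope (fun s => diam A (θ s)) t z < r := by
  have hall : ∀ᶠ z in 𝓝[>] t, ∀ p ∈ A ×ˢ A,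
      (|θ z p.1 - θ z p.2| - diam A (θ t)) / (z - t) < r :=
    (Finset.eventually_all (A ×ˢ A)).2 h
  refine ((hall.and eventually_mem_nhdsWithin).frequently).mono ?_
  rintro z ⟨hz, hzt⟩
  obtain ⟨i, hi, j, hj, hD⟩ := exists_diam_pair hA (θ z)
  rw [slope_def_field, hD]
  exact hz (i, j) (Finset.mem_product.2 ⟨hi, hj⟩)

lemma coord_tendsto {N : ℕ} {κ : ℝ} {ν : Fin N → ℝ} {θ : ℝ → Fin N → ℝ}
    (hθ : IsKuramotoOn κ ν θ) {t : ℝ} (ht : 0 ≤ t) (k : Fin N) :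
    Tendsto (fun z => θ z k) (𝓝[>] t) (𝓝 (θ t k)) :=
  ((hθ k t ht).continuousWithinAt).mono_left
    (nhdsWithin_mono t (fun z hz => le_trans ht (le_of_lt hz)))

lemma slope_upper {N : ℕ} (hN : 1 ≤ N) {κ : ℝ} (hκ0 : 0 ≤ κ) (hγ₂ : γ ≤ 1)
    (ν : Fin N → ℝ) {A B : Finset (Fin N)} (hA : A.Nonempty) (hAB : A ⊆ B)
    (hcard : γ * N ≤ (A.card : ℝ)) {θ : ℝ → Fin N → ℝ} (hθ : IsKuramotoOn κ ν θ)
    {t : ℝ} (ht : 0 ≤ t) (hpos : 0 < diam A (θ t)) (hπ : diam A (θ t) ≤ π)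
    {r : ℝ} (hr : diam B ν - κ * fγ γ (diam A (θ t)) < r) :
    ∃ᶠ z in 𝓝[>] t, slope (fun s => diam A (θ s)) t z < r := by
  apply slope_core hA
  rintro ⟨i, j⟩ hp
  obtain ⟨hi, hj⟩ := Finset.mem_product.1 hp
  simp only
  rcases lt_or_eq_of_le (abs_sub_le_diam hi hj : |θ t i - θ t j| ≤ diam A (θ t)) with hlt | heq
  · have hnum : Tendsto (fun z => |θ z i - θ z j| - diam A (θ t)) (𝓝[>] t)
        (𝓝 (|θ t i - θ t j| - diam A (θ t))) :=
      (((coord_tendsto hθ ht i).sub (coord_tendsto hθ ht j)).abs).sub tendsto_const_nhds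
    have hbot : Tendsto (fun z => (|θ z i - θ z j| - diam A (θ t)) * (z - t)⁻¹)
        (𝓝[>] t) atBot :=
      Tendsto.neg_mul_atTop (by linarith) hnum (tendsto_sub_inv t)
    have hev := hbot.eventually (eventually_lt_atBot r)
    exact hev.mono (fun z hz => by rwa [div_eq_mul_inv])
  · have hmax : ∀ k ∈ A, |θ t k - θ t i| ≤ diam A (θ t) ∧ |θ t k - θ t j| ≤ diam A (θ t) :=
      fun k hk => ⟨abs_sub_le_diam hk hi, abs_sub_le_diam hk hj⟩
    rcases (abs_eq (le_of_lt hpos)).1 heq with ha | ha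
    · have hd := pair_deriv_le hN hκ0 hγ₂ ν A B hAB hcard (θ t) hi hj ha hπ hmax
      have hderiv : HasDerivWithinAt (fun s => θ s i - θ s j)
          ((ν i + κ / N * ∑ k, Real.sin (θ t k - θ t i))
            - (ν j + κ / N * ∑ k, Real.sin (θ t k - θ t j))) (Ici t) t :=
        ((hθ i t ht).sub (hθ j t ht)).mono (Ici_subset_Ici.2 ht)
      have hslope : Tendsto (slope (fun s => θ s i - θ s j) t) (𝓝[>] t)
          (𝓝 ((ν i + κ / N * ∑ k, Real.sin (θ t k - θ t i))
            - (ν j + κ / N * ∑ k, Real.sin (θ t k - θ t j)))) :=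
        (hasDerivWithinAt_iff_tendsto_slope' (lt_irrefl t)).1 hderiv.Ioi_of_Ici
      have h1 : ∀ᶠ z in 𝓝[>] t, slope (fun s => θ s i - θ s j) t z < r :=
        hslope (Iio_mem_nhds (lt_of_le_of_lt hd hr))
      have h2 : ∀ᶠ z in 𝓝[>] t, 0 < θ z i - θ z j := by
        have := (coord_tendsto hθ ht i).sub (coord_tendsto hθ ht j)
        exact this (Ioi_mem_nhds (by rw [ha]; exact hpos))
      filter_upwards [h1, h2, eventually_mem_nhdsWithin] with z h1z h2z hzt
      rw [slope_def_field] at h1z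
      rw [abs_of_pos h2z]
      rw [ha] at h1z
      exact h1z
    · have ha' : θ t j - θ t i = diam A (θ t) := by linarith
      have hmax' : ∀ k ∈ A, |θ t k - θ t j| ≤ diam A (θ t) ∧ |θ t k - θ t i| ≤ diam A (θ t) :=
        fun k hk => ⟨(hmax k hk).2, (hmax k hk).1⟩
      have hd := pair_deriv_le hN hκ0 hγ₂ ν A B hAB hcard (θ t) hj hi ha' hπ hmax'
      have hderiv : HasDerivWithinAt (fun s => θ s j - θ s i)
          ((ν j + κ / N * ∑ k, Real.sin (θ t k - θ t j))
            - (ν i + κ / N * ∑ k, Real.sin (θ t k - θ t i))) (Ici t) t :=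
        ((hθ j t ht).sub (hθ i t ht)).mono (Ici_subset_Ici.2 ht)
      have hslope : Tendsto (slope (fun s => θ s j - θ s i) t) (𝓝[>] t)
          (𝓝 ((ν j + κ / N * ∑ k, Real.sin (θ t k - θ t j))
            - (ν i + κ / N * ∑ k, Real.sin (θ t k - θ t i)))) :=
        (hasDerivWithinAt_iff_tendsto_slope' (lt_irrefl t)).1 hderiv.Ioi_of_Ici
      have h1 : ∀ᶠ z in 𝓝[>] t, slope (fun s => θ s j - θ s i) t z < r :=
        hslope (Iio_mem_nhds (lt_of_le_of_lt hd hr))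
      have h2 : ∀ᶠ z in 𝓝[>] t, 0 < θ z j - θ z i := by
        have := (coord_tendsto hθ ht j).sub (coord_tendsto hθ ht i)
        exact this (Ioi_mem_nhds (by rw [ha']; exact hpos))
      filter_upwards [h1, h2, eventually_mem_nhdsWithin] with z h1z h2z hzt
      rw [slope_def_field] at h1z
      rw [abs_sub_comm, abs_of_pos h2z]
      rw [ha'] at h1z
      exact h1z

lemma slope_upper_crude {N : ℕ} {κ : ℝ} (ν : Fin N → ℝ) {A : Finset (Fin N)}
    (hA : A.Nonempty) {θ : ℝ → Fin N → ℝ} (hθ : IsKuramotoOn κ ν θ)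
    {t : ℝ} (ht : 0 ≤ t) {r : ℝ}
    (hr : ∀ p ∈ A ×ˢ A, |(ν p.1 + κ / N * ∑ k, Real.sin (θ t k - θ t p.1))
      - (ν p.2 + κ / N * ∑ k, Real.sin (θ t k - θ t p.2))| < r) :
    ∃ᶠ z in 𝓝[>] t, slope (fun s => diam A (θ s)) t z < r := by
  apply slope_core hA
  rintro ⟨i, j⟩ hp
  obtain ⟨hi, hj⟩ := Finset.mem_product.1 hp
  simp only
  have hderiv : HasDerivWithinAt (fun s => θ s i - θ s j)
      ((ν i + κ / N * ∑ k, Real.sin (θ t k - θ t i))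
        - (ν j + κ / N * ∑ k, Real.sin (θ t k - θ t j))) (Ici t) t :=
    ((hθ i t ht).sub (hθ j t ht)).mono (Ici_subset_Ici.2 ht)
  have hslope := (hasDerivWithinAt_iff_tendsto_slope' (lt_irrefl t)).1 hderiv.Ioi_of_Ici
  have h1 : ∀ᶠ z in 𝓝[>] t, |slope (fun s => θ s i - θ s j) t z| < r :=
    hslope.abs (Iio_mem_nhds (hr (i, j) hp))
  filter_upwards [h1, eventually_mem_nhdsWithin] with z h1z hzt
  have hzt' : (0:ℝ) < z - t := by simpa [sub_pos] using hzt
  have hDt : |θ t i - θ t j| ≤ diam A (θ t) := abs_sub_le_diam hi hj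
  have hnum : |θ z i - θ z j| - diam A (θ t) ≤ |(θ z i - θ z j) - (θ t i - θ t j)| := by
    have := abs_sub_abs_le_abs_sub (θ z i - θ z j) (θ t i - θ t j)
    linarith
  calc (|θ z i - θ z j| - diam A (θ t)) / (z - t)
      ≤ |(θ z i - θ z j) - (θ t i - θ t j)| / (z - t) := by gcongr
    _ = |slope (fun s => θ s i - θ s j) t z| := by
        rw [slope_def_field, abs_div, abs_of_pos hzt']
    _ < r := h1z

lemma diam_continuousOn {N : ℕ} {κ : ℝ} {ν : Fin N → ℝ} {A : Finset (Fin N)} (hA : A.Nonempty)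
    {θ : ℝ → Fin N → ℝ} (hθ : IsKuramotoOn κ ν θ) :
    ContinuousOn (fun s => diam A (θ s)) (Set.Ici 0) := by
  intro t ht
  have h : ∀ p ∈ A ×ˢ A, Tendsto (fun z => |θ z p.1 - θ z p.2|) (𝓝[Set.Ici 0] t)
      (𝓝 (|θ t p.1 - θ t p.2|)) :=
    fun p _ => (((hθ p.1 t ht).continuousWithinAt).sub ((hθ p.2 t ht).continuousWithinAt)).abs
  have := Filter.Tendsto.finset_sup'_nhds_apply (hA.product hA) h
  unfold ContinuousWithinAt
  simp only [diam_eq_sup' A hA]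
  exact this

/-! ### the barrier lemma -/

lemma barrier {N : ℕ} (hN : 1 ≤ N) {κ : ℝ} (hκ0 : 0 ≤ κ) (hγ₂ : γ ≤ 1)
    (ν : Fin N → ℝ) {A B : Finset (Fin N)} (hA : A.Nonempty) (hAB : A ⊆ B)
    (hcard : γ * N ≤ (A.card : ℝ)) {θ : ℝ → Fin N → ℝ} (hθ : IsKuramotoOn κ ν θ)
    {a b : ℝ} (ha : 0 ≤ a) {W W' : ℝ → ℝ}
    (hfa : diam A (θ a) ≤ W a) (hW : ContinuousOn W (Icc a b))
    (hW' : ∀ x ∈ Ico a b, HasDerivWithinAt W (W' x) (Ici x) x)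
    (hcontact : ∀ x ∈ Ico a b, diam A (θ x) = W x →
      (0 < diam A (θ x) ∧ diam A (θ x) ≤ π) ∧ diam B ν - κ * fγ γ (diam A (θ x)) < W' x) :
    ∀ x ∈ Icc a b, diam A (θ x) ≤ W x := by
  have hsub : Icc a b ⊆ Ici (0:ℝ) := fun z hz => le_trans ha hz.1
  intro x hx
  refine image_le_of_liminf_slope_right_lt_deriv_boundary'
    (f := fun s => diam A (θ s))
    (f' := fun x => if 0 < diam A (θ x) ∧ diam A (θ x) ≤ π
      then diam B ν - κ * fγ γ (diam A (θ x))
      else (A ×ˢ A).sup' (hA.product hA)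
        (fun p => |(ν p.1 + κ / N * ∑ k, Real.sin (θ x k - θ x p.1))
          - (ν p.2 + κ / N * ∑ k, Real.sin (θ x k - θ x p.2))|))
    ((diam_continuousOn hA hθ).mono hsub) ?_ hfa hW hW' ?_ hx
  · intro y hy r hr
    by_cases hg : 0 < diam A (θ y) ∧ diam A (θ y) ≤ π
    · rw [if_pos hg] at hr
      exact slope_upper hN hκ0 hγ₂ ν hA hAB hcard hθ (le_trans ha hy.1) hg.1 hg.2 hr
    · rw [if_neg hg] at hr
      apply slope_upper_crude ν hA hθ (le_trans ha hy.1)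
      intro p hp
      exact lt_of_le_of_lt (Finset.le_sup'
        (fun p => |(ν p.1 + κ / N * ∑ k, Real.sin (θ y k - θ y p.1))
          - (ν p.2 + κ / N * ∑ k, Real.sin (θ y k - θ y p.2))|) hp) hr
  · intro y hy hcon
    obtain ⟨hg, hlt⟩ := hcontact y hy hcon
    rw [if_pos hg]
    exact hlt

end KuramotoAux

open Set Filter Real Topology KuramotoAux

/-- Stability of a majority ensemble (Theorem 3.1 (1)): if `A ⊆ B`, `|A| ≥ γN`,
`γ ∈ (1/2,1]`, `ℓ ∈ (0, 2 arccos((1−γ)/γ))`, `κ > D(Ω_B)/(γ sin ℓ − 2(1−γ) sin(ℓ/2))`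
and `D(Θ_A(0)) ≤ ℓ`, then `D(Θ_A(t)) ≤ ℓ` for all `t ≥ 0` and
`limsup_{t→∞} D(Θ_A(t)) ≤ φ₁`, where `φ₁` is the solution of
`γ sin φ − 2(1−γ) sin(φ/2) = D(Ω_B)/κ` in `[0, θ*]`. -/
theorem majority_ensemble_stable (N : ℕ) (hN : 1 ≤ N) (κ γ ℓ : ℝ)
    (hγ₁ : 1 / 2 < γ) (hγ₂ : γ ≤ 1)
    (hℓ : ℓ ∈ Set.Ioo 0 (2 * Real.arccos ((1 - γ) / γ)))
    (ν : Fin N → ℝ) (A B : Finset (Fin N)) (hAB : A ⊆ B)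
    (hcard : γ * N ≤ (A.card : ℝ))
    (hκ : diam B ν / (γ * Real.sin ℓ - 2 * (1 - γ) * Real.sin (ℓ / 2)) < κ)
    (θ : ℝ → Fin N → ℝ) (hθ : IsKuramotoOn κ ν θ)
    (h0 : diam A (θ 0) ≤ ℓ)
    (θs φ₁ : ℝ)
    (hθs : θs = 2 * Real.arccos ((1 - γ + Real.sqrt ((1 - γ) ^ 2 + 8 * γ ^ 2)) / (4 * γ)))
    (hφ₁mem : φ₁ ∈ Set.Icc 0 θs)
    (hφ₁root : γ * Real.sin φ₁ - 2 * (1 - γ) * Real.sin (φ₁ / 2) = diam B ν / κ) :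
    (∀ t ≥ (0 : ℝ), diam A (θ t) ≤ ℓ) ∧
    Filter.limsup (fun t => diam A (θ t)) Filter.atTop ≤ φ₁ := by
  have hγ0 : (0:ℝ) < γ := by linarith
  have hNpos : (0:ℝ) < N := by
    have : (0:ℕ) < N := hN
    exact_mod_cast this
  have hAne : A.Nonempty := by
    rw [← Finset.card_pos]
    by_contra h
    push_neg at h
    have h0' : A.card = 0 := Nat.le_zero.1 h
    rw [h0'] at hcard
    push_cast at hcard
    nlinarith
  have hBne : B.Nonempty := hAne.mono hAB
  have hΩ0 : 0 ≤ diam B ν := diam_nonneg hBne ν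
  have hflpos : 0 < fγ γ ℓ := fγ_pos hγ₁ hγ₂ hℓ
  have hκ' : diam B ν / fγ γ ℓ < κ := hκ
  have hκpos : 0 < κ := lt_of_le_of_lt (div_nonneg hΩ0 hflpos.le) hκ'
  have hΩκ : diam B ν < κ * fγ γ ℓ := by
    rw [div_lt_iff₀ hflpos] at hκ'
    linarith [hκ']
  have hπℓ : ℓ < π := by
    have harc : Real.arccos ((1 - γ) / γ) ≤ π / 2 :=
      Real.arccos_le_pi_div_two.2 (div_nonneg (by linarith) hγ0.le)
    linarith [hℓ.2]
  -- Part 1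
  have part1 : ∀ t ≥ (0:ℝ), diam A (θ t) ≤ ℓ := by
    intro t htt
    have hbar := barrier hN hκpos.le hγ₂ ν hAne hAB hcard hθ (le_refl (0:ℝ))
      (b := t) (W := fun _ => ℓ) (W' := fun _ => 0) h0 continuousOn_const
      (fun x _ => hasDerivWithinAt_const x _ ℓ)
      (fun x _ hcon => by
        beta_reduce at hcon ⊢
        rw [hcon]
        exact ⟨⟨hℓ.1, hπℓ.le⟩, by linarith⟩)
    exact hbar t ⟨htt, le_refl t⟩
  refine ⟨part1, ?_⟩
  -- monotonicity facts
  have hmono : StrictMonoOn (fγ γ) (Set.Icc 0 θs) := by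
    rw [hθs]; exact fγ_strictMonoOn hγ₁ hγ₂
  have hanti : AntitoneOn (fγ γ) (Set.Icc θs π) := by
    rw [hθs]; exact fγ_antitoneOn hγ₁ hγ₂
  have hroot : fγ γ φ₁ = diam B ν / κ := hφ₁root
  have hΩκ' : diam B ν / κ < fγ γ ℓ := by
    rw [div_lt_iff₀ hκpos]
    linarith [hΩκ]
  have key : ∀ c, φ₁ < c → c ≤ ℓ → diam B ν / κ < fγ γ c := by
    intro c h1 h2
    rcases le_or_gt c θs with h3 | h3
    · have := hmono hφ₁mem ⟨le_trans hφ₁mem.1 h1.le, h3⟩ h1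
      rw [hroot] at this
      exact this
    · have h4 : fγ γ ℓ ≤ fγ γ c :=
        hanti ⟨h3.le, le_trans h2 hπℓ.le⟩ ⟨le_trans h3.le h2, hπℓ.le⟩ h2
      linarith
  -- eventual bound
  have eventual : ∀ ε, 0 < ε → φ₁ + ε ≤ ℓ →
      ∀ᶠ t in atTop, diam A (θ t) ≤ φ₁ + ε := by
    intro ε hε hεℓ
    set c := φ₁ + ε with hcdef
    have hφ₁0 : 0 ≤ φ₁ := hφ₁mem.1
    have hc0 : 0 < c := by linarith
    have hcκ : diam B ν / κ < fγ γ c := key c (by linarith) hεℓ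
    have hcΩ : diam B ν < κ * fγ γ c := by
      rw [div_lt_iff₀ hκpos] at hcκ
      linarith
    set q := min (fγ γ c) (fγ γ ℓ) with hqdef
    have hqκ : diam B ν < κ * q := by
      rcases le_total (fγ γ c) (fγ γ ℓ) with h | h
      · rw [hqdef, min_eq_left h]; exact hcΩ
      · rw [hqdef, min_eq_right h]; exact hΩκ
    set δ := κ * q - diam B ν with hδdef
    have hδpos : 0 < δ := by rw [hδdef]; linarith
    have key2 : ∀ x, c ≤ x → x ≤ ℓ → q ≤ fγ γ x := by
      intro x hcx hxℓ
      rcases le_or_gt x θs with h3 | h3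
      · exact le_trans (min_le_left _ _)
          (hmono.monotoneOn ⟨hc0.le, le_trans hcx h3⟩ ⟨by linarith [hc0], h3⟩ hcx)
      · exact le_trans (min_le_right _ _)
          (hanti ⟨h3.le, le_trans hxℓ hπℓ.le⟩ ⟨le_trans h3.le hxℓ, hπℓ.le⟩ hxℓ)
    have step1 : ∃ t₀ ≥ (0:ℝ), diam A (θ t₀) ≤ c := by
      by_contra hcon
      push_neg at hcon
      set T := (ℓ - c) / (δ/2) + 1 with hTdef
      have hT0 : 0 ≤ T := by
        have h1 : 0 ≤ (ℓ - c) / (δ/2) := div_nonneg (by linarith) (by linarith)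
        rw [hTdef]; linarith
      have hW' : ∀ x ∈ Ico (0:ℝ) T,
          HasDerivWithinAt (fun s => ℓ - δ/2 * s) (-(δ/2)) (Ici x) x := by
        intro x _
        simpa using ((hasDerivWithinAt_id x (Ici x)).const_mul (δ/2)).const_sub ℓ
      have hbar := barrier hN hκpos.le hγ₂ ν hAne hAB hcard hθ (le_refl (0:ℝ))
        (b := T) (W := fun s => ℓ - δ/2 * s) (W' := fun _ => -(δ/2))
        (by simpa using h0)
        ((continuous_const.sub (continuous_const.mul continuous_id)).continuousOn)
        hW'
        (fun x hx hcon2 => by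
          beta_reduce at hcon2 ⊢
          have hxc : c < diam A (θ x) := hcon x hx.1
          have hxℓ : diam A (θ x) ≤ ℓ := part1 x hx.1
          have hfq : q ≤ fγ γ (diam A (θ x)) := key2 _ hxc.le hxℓ
          refine ⟨⟨by linarith, by linarith⟩, ?_⟩
          have : κ * q ≤ κ * fγ γ (diam A (θ x)) :=
            mul_le_mul_of_nonneg_left hfq hκpos.le
          rw [hδdef] at *
          linarith)
      have hT := hbar T ⟨hT0, le_refl T⟩
      have hval : δ/2 * T = (ℓ - c) + δ/2 := by
        rw [hTdef, mul_add, mul_one, mul_div_cancel₀]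
        linarith
      have : diam A (θ T) < c := by linarith
      exact absurd this (not_lt.2 (hcon T hT0).le)
    obtain ⟨t₀, ht₀0, ht₀⟩ := step1
    have step2 : ∀ t, t₀ ≤ t → diam A (θ t) ≤ c := by
      intro t htt
      have hbar := barrier hN hκpos.le hγ₂ ν hAne hAB hcard hθ ht₀0
        (b := t) (W := fun _ => c) (W' := fun _ => 0) ht₀ continuousOn_const
        (fun x _ => hasDerivWithinAt_const x _ c)
        (fun x _ hcon2 => by
          beta_reduce at hcon2 ⊢
          rw [hcon2]
          exact ⟨⟨hc0, by linarith⟩, by linarith⟩)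
      exact hbar t ⟨htt, le_refl t⟩
    exact eventually_atTop.2 ⟨t₀, step2⟩
  -- limsup
  have hcobdd : IsCoboundedUnder (· ≤ ·) atTop (fun t => diam A (θ t)) :=
    isCoboundedUnder_le_of_le atTop (fun t => diam_nonneg hAne (θ t))
  have hlim : ∀ c', (∀ᶠ t in atTop, diam A (θ t) ≤ c') →
      limsup (fun t => diam A (θ t)) atTop ≤ c' :=
    fun c' h => limsup_le_of_le hcobdd h
  rcases le_or_gt ℓ φ₁ with hcase | hcase
  · exact le_trans (hlim ℓ (eventually_atTop.2 ⟨0, part1⟩)) hcase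
  · apply le_of_forall_pos_le_add
    intro ε hε
    have hε' : 0 < min ε (ℓ - φ₁) := lt_min hε (by linarith)
    have h := hlim (φ₁ + min ε (ℓ - φ₁))
      (eventual _ hε' (by linarith [min_le_right ε (ℓ - φ₁)]))
    calc limsup (fun t => diam A (θ t)) atTop ≤ φ₁ + min ε (ℓ - φ₁) := h
      _ ≤ φ₁ + ε := by linarith [min_le_left ε (ℓ - φ₁)]
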